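/- Let A and B be 2n×2n complex matrices with A·B* = B·A* and such that the 2n×4n block matrix (A B) has maximal rank 2n. Define the 2n×2n block matrices D1 = [[0, −I_n],[0, I_n]] and D2 = [[I_n, 0],[I_n, 0]], and set L = (1/2)(A·D1 + B·D2) and M = B·D1 − A·D2. Then L·M* = M·L* and the 2n×4n block matrix (L M) has maximal rank 2n. -/

import Mathlib

open Matrix

section Aux

variable {n : ℕ}

private abbrev D1' (n : ℕ) : Matrix (Fin n ⊕ Fin n) (Fin n ⊕ Fin n) ℂ := fromBlocks 0 (-1) 0 1
private abbrev D2' (n : ℕ) : Matrix (Fin n ⊕ Fin n) (Fin n ⊕ Fin n) ℂ := fromBlocks 1 0 1 0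

private lemma hd12 : D1' n * (D2' n)ᴴ = 0 := by
  simp [D1', D2', fromBlocks_conjTranspose, fromBlocks_multiply, ← fromBlocks_zero]

private lemma hd21 : D2' n * (D1' n)ᴴ = 0 := by
  simp [D1', D2', fromBlocks_conjTranspose, fromBlocks_multiply, ← fromBlocks_zero]

private lemma hsum : D1' n * (D1' n)ᴴ + D2' n * (D2' n)ᴴ = (2 : ℂ) • 1 := by
  have : ((2:ℂ) • (1 : Matrix (Fin n ⊕ Fin n) (Fin n ⊕ Fin n) ℂ)) =
      fromBlocks ((2:ℂ) • 1) 0 0 ((2:ℂ) • 1) := by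
    rw [← fromBlocks_one, fromBlocks_smul]; simp
  rw [this]
  simp [D1', D2', fromBlocks_conjTranspose, fromBlocks_multiply, fromBlocks_add]
  norm_num [two_smul]

end Aux

set_option maxHeartbeats 1000000 in
/-- If (A,B) satisfy the self-adjointness conditions (BC-KS), then so does the pair
(L,M) obtained by L = (1/2)(A·D1 + B·D2), M = B·D1 - A·D2, where
D1 = [[0,-1],[0,1]] and D2 = [[1,0],[1,0]]. -/
theorem lm_parameterization_selfadjoint {n : ℕ}
    (A B : Matrix (Fin n ⊕ Fin n) (Fin n ⊕ Fin n) ℂ)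
    (h1 : A * Bᴴ = B * Aᴴ)
    (h2 : (fromCols A B).rank = 2 * n) :
    (let D1 : Matrix (Fin n ⊕ Fin n) (Fin n ⊕ Fin n) ℂ := fromBlocks 0 (-1) 0 1
     let D2 : Matrix (Fin n ⊕ Fin n) (Fin n ⊕ Fin n) ℂ := fromBlocks 1 0 1 0
     let L : Matrix (Fin n ⊕ Fin n) (Fin n ⊕ Fin n) ℂ := (1 / 2 : ℂ) • (A * D1 + B * D2)
     let M : Matrix (Fin n ⊕ Fin n) (Fin n ⊕ Fin n) ℂ := B * D1 - A * D2
     L * Mᴴ = M * Lᴴ ∧ (fromCols L M).rank = 2 * n) := by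
  intro D1 D2 L M
  have e12 : D1 * D2ᴴ = 0 := hd12
  have e21 : D2 * D1ᴴ = 0 := hd21
  have esum : D1 * D1ᴴ + D2 * D2ᴴ = (2 : ℂ) • 1 := hsum
  have eK1 : D1 * D1ᴴ = (2 : ℂ) • 1 - D2 * D2ᴴ := eq_sub_of_add_eq esum
  constructor
  · -- self-adjointness
    have hM : Mᴴ = D1ᴴ * Bᴴ - D2ᴴ * Aᴴ := by
      simp [M, conjTranspose_sub, conjTranspose_mul]
    have hLt : Lᴴ = (1 / 2 : ℂ) • (D1ᴴ * Aᴴ + D2ᴴ * Bᴴ) := by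
      simp [L, conjTranspose_smul, conjTranspose_add, conjTranspose_mul]
    have key : (A * D1 + B * D2) * (D1ᴴ * Bᴴ - D2ᴴ * Aᴴ)
        = (B * D1 - A * D2) * (D1ᴴ * Aᴴ + D2ᴴ * Bᴴ) := by
      have l1 : A * D1 * (D1ᴴ * Bᴴ) = (2:ℂ) • (A * Bᴴ) - A * (D2 * D2ᴴ) * Bᴴ := by
        rw [← Matrix.mul_assoc, Matrix.mul_assoc A D1 D1ᴴ, eK1]
        simp [Matrix.mul_sub, Matrix.sub_mul, Matrix.mul_smul, Matrix.smul_mul,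
          mul_smul_comm, smul_mul_assoc, Matrix.mul_assoc]
      have l2 : B * D1 * (D1ᴴ * Aᴴ) = (2:ℂ) • (B * Aᴴ) - B * (D2 * D2ᴴ) * Aᴴ := by
        rw [← Matrix.mul_assoc, Matrix.mul_assoc B D1 D1ᴴ, eK1]
        simp [Matrix.mul_sub, Matrix.sub_mul, mul_smul_comm, smul_mul_assoc,
          Matrix.mul_assoc]
      calc (A * D1 + B * D2) * (D1ᴴ * Bᴴ - D2ᴴ * Aᴴ)
          = A * D1 * (D1ᴴ * Bᴴ) - A * (D1 * D2ᴴ) * Aᴴ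
            + B * (D2 * D1ᴴ) * Bᴴ - B * (D2 * D2ᴴ) * Aᴴ := by
            simp only [Matrix.add_mul, Matrix.mul_sub, Matrix.mul_assoc]; abel
        _ = (2:ℂ) • (A * Bᴴ) - A * (D2 * D2ᴴ) * Bᴴ - B * (D2 * D2ᴴ) * Aᴴ := by
            rw [l1, e12, e21]; simp
        _ = (2:ℂ) • (B * Aᴴ) - B * (D2 * D2ᴴ) * Aᴴ - A * (D2 * D2ᴴ) * Bᴴ := by
            rw [h1]; abel
        _ = B * D1 * (D1ᴴ * Aᴴ) + B * (D1 * D2ᴴ) * Bᴴ - A * (D2 * D1ᴴ) * Aᴴ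
            - A * (D2 * D2ᴴ) * Bᴴ := by
            rw [l2, e12, e21]; simp
        _ = (B * D1 - A * D2) * (D1ᴴ * Aᴴ + D2ᴴ * Bᴴ) := by
            simp only [Matrix.sub_mul, Matrix.mul_add, Matrix.mul_assoc]; abel
    calc L * Mᴴ = (1/2 : ℂ) • ((A * D1 + B * D2) * (D1ᴴ * Bᴴ - D2ᴴ * Aᴴ)) := by
          rw [hM, show L = (1/2 : ℂ) • (A * D1 + B * D2) from rfl, Matrix.smul_mul]
      _ = M * Lᴴ := by rw [key, hLt, Matrix.mul_smul]
  · -- rank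
    set T : Matrix ((Fin n ⊕ Fin n) ⊕ (Fin n ⊕ Fin n)) ((Fin n ⊕ Fin n) ⊕ (Fin n ⊕ Fin n)) ℂ :=
      fromBlocks ((1/2 : ℂ) • D1) (-D2) ((1/2 : ℂ) • D2) D1 with hT
    set Tinv : Matrix ((Fin n ⊕ Fin n) ⊕ (Fin n ⊕ Fin n)) ((Fin n ⊕ Fin n) ⊕ (Fin n ⊕ Fin n)) ℂ :=
      fromBlocks D1ᴴ D2ᴴ (-((1/2 : ℂ) • D2ᴴ)) ((1/2 : ℂ) • D1ᴴ) with hTinv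
    have b11 : ((1/2 : ℂ) • D1) * D1ᴴ + (-D2) * (-((1/2 : ℂ) • D2ᴴ)) = 1 := by
      rw [Matrix.smul_mul, Matrix.neg_mul, Matrix.mul_neg, neg_neg, Matrix.mul_smul,
        ← smul_add, esum, smul_smul]
      norm_num
    have b12 : ((1/2 : ℂ) • D1) * D2ᴴ + (-D2) * ((1/2 : ℂ) • D1ᴴ) = 0 := by
      rw [Matrix.smul_mul, Matrix.neg_mul, Matrix.mul_smul, e12, e21]
      simp
    have b21 : ((1/2 : ℂ) • D2) * D1ᴴ + D1 * (-((1/2 : ℂ) • D2ᴴ)) = 0 := by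
      rw [Matrix.smul_mul, Matrix.mul_neg, Matrix.mul_smul, e21, e12]
      simp
    have b22 : ((1/2 : ℂ) • D2) * D2ᴴ + D1 * ((1/2 : ℂ) • D1ᴴ) = 1 := by
      rw [Matrix.smul_mul, Matrix.mul_smul, ← smul_add, add_comm (D2 * D2ᴴ) (D1 * D1ᴴ),
        esum, smul_smul]
      norm_num
    have hTT : T * Tinv = 1 := by
      rw [hT, hTinv, fromBlocks_multiply, b11, b12, b21, b22, fromBlocks_one]
    have hInv : Invertible T := invertibleOfRightInverse T Tinv hTT
    have hdet : IsUnit T.det := Matrix.isUnit_det_of_invertible T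
    have hL' : A * ((1/2 : ℂ) • D1) + B * ((1/2 : ℂ) • D2) = L := by
      rw [Matrix.mul_smul, Matrix.mul_smul, ← smul_add]
    have hM' : A * (-D2) + B * D1 = M := by
      show A * (-D2) + B * D1 = B * D1 - A * D2
      rw [Matrix.mul_neg]; abel
    have hCol : fromCols L M = fromCols A B * T := by
      rw [hT, fromCols_mul_fromBlocks, hL', hM']
    rw [hCol, rank_mul_eq_left_of_isUnit_det _ _ hdet, h2]
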